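/- Let $p$ be a prime, and let $g : \mathbb{Z}_p \to \mathbb{Q}_p$ be an analytic function (given by a power series converging on $\mathbb{Z}_p$). For any $s_0 \in \mathbb{Z}_p$ and any $m \ge 1$, if $(j_1, \dots, j_m)$ ranges over $m$-tuples of pairwise distinct elements of $\mathbb{Z}_p$ all converging to $s_0$, then $\frac{g^{(m-1)}(s_0)}{(m-1)!} = \lim \sum_{l=1}^{m} \frac{g(j_l)}{\prod_{k \ne l} (j_l - j_k)}$ (Newton interpolation formula: divided differences of an analytic function converge to the corresponding Taylor coefficient). -/

import Mathlib

open Finset Filter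

/-! ### Complete homogeneous symmetric functions via lists -/

def hh {K : Type*} [CommRing K] : ℕ → List K → K
  | 0, _ => 1
  | _ + 1, [] => 0
  | d + 1, a :: L => hh (d + 1) L + a * hh d (a :: L)
  termination_by d L => (d, L.length)

section CommRingLemmas

variable {K : Type*} [CommRing K]

@[simp] lemma hh_zero (L : List K) : hh 0 L = 1 := by cases L <;> simp [hh]

@[simp] lemma hh_nil (d : ℕ) : hh (d + 1) ([] : List K) = 0 := by simp [hh]

lemma hh_cons (d : ℕ) (a : K) (L : List K) :
    hh (d + 1) (a :: L) = hh (d + 1) L + a * hh d (a :: L) := by rw [hh]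

lemma hh_singleton (d : ℕ) (a : K) : hh d [a] = a ^ d := by
  induction d with
  | zero => simp
  | succ d ih => rw [hh_cons, ih, hh_nil, pow_succ]; ring

lemma hh_mul_sub (d : ℕ) : ∀ (a b : K) (L : List K),
    a * hh d (a :: L) - b * hh d (b :: L) = (a - b) * hh d (a :: b :: L) := by
  induction d with
  | zero => intro a b L; simp
  | succ d ih =>
    intro a b L
    rw [hh_cons d a (b :: L), hh_cons, hh_cons]
    linear_combination a * ih a b L

lemma hh_swap (d : ℕ) : ∀ (a b : K) (L : List K),
    hh d (a :: b :: L) = hh d (b :: a :: L) := by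
  induction d with
  | zero => simp
  | succ d ih =>
    intro a b L
    rw [hh_cons d a (b :: L), hh_cons d b (a :: L), hh_cons d b L, hh_cons d a L]
    linear_combination (-1 : K) * hh_mul_sub d a b L + b * ih a b L

lemma hh_perm {L1 L2 : List K} (h : L1.Perm L2) : ∀ d, hh d L1 = hh d L2 := by
  induction h with
  | nil => intro d; rfl
  | cons x h ih =>
    intro d
    induction d with
    | zero => simp
    | succ d ihd => rw [hh_cons, hh_cons, ih (d + 1), ihd]
  | swap x y l => intro d; exact hh_swap d y x l
  | trans h1 h2 ih1 ih2 => intro d; rw [ih1 d, ih2 d]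

lemma hh_two (d : ℕ) (a b : K) (L : List K) :
    hh (d + 1) (a :: L) - hh (d + 1) (b :: L) = (a - b) * hh d (a :: b :: L) := by
  rw [hh_cons, hh_cons]
  linear_combination hh_mul_sub d a b L

end CommRingLemmas

section FieldLemmas

variable {K : Type*} [Field K] [DecidableEq K]

omit [Field K] in
lemma erase_b_eq {S : Finset K} {a b : K} (ha : a ∈ S) (hab : a ≠ b) :
    S.erase b = insert a ((S.erase a).erase b) := by
  ext x
  simp only [mem_insert, mem_erase]
  rcases eq_or_ne x a with rfl | hx
  · simp [hab, ha]
  · simp only [hx, false_or]; tauto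

omit [Field K] in
lemma s_eq {S : Finset K} {a b : K} (ha : a ∈ S) (hb : b ∈ S) (hab : a ≠ b) :
    S = insert a (insert b ((S.erase a).erase b)) := by
  ext x
  simp only [mem_insert, mem_erase]
  rcases eq_or_ne x a with rfl | hx <;> rcases eq_or_ne x b with rfl | hx2 <;>
    simp_all

lemma hf_erase_sub {S : Finset K} {a b : K} (ha : a ∈ S) (hb : b ∈ S) (hab : a ≠ b) (d : ℕ) :
    hh (d + 1) (S.erase b).toList - hh (d + 1) (S.erase a).toList
      = (a - b) * hh d S.toList := by
  set T := (S.erase a).erase b with hT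
  have haT : a ∉ T := fun h => (mem_erase.mp (mem_of_mem_erase h)).1 rfl
  have hbT : b ∉ T := fun h => (mem_erase.mp h).1 rfl
  have habT : a ∉ insert b T := by simp [haT, hab]
  have e1 : S.erase b = insert a T := erase_b_eq ha hab
  have e2 : S.erase a = insert b T := by
    rw [hT, erase_right_comm]
    exact erase_b_eq hb (Ne.symm hab)
  have e3 : S = insert a (insert b T) := s_eq ha hb hab
  rw [e1, e2, e3,
    hh_perm (Finset.toList_insert haT) (d + 1),
    hh_perm (Finset.toList_insert hbT) (d + 1),
    hh_perm ((Finset.toList_insert habT).trans ((Finset.toList_insert hbT).cons a)) d]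
  exact hh_two d a b T.toList

/-- Divided difference of `x ↦ x ^ n` over the points of `S`. -/
noncomputable def DD (n : ℕ) (S : Finset K) : K :=
  ∑ x ∈ S, x ^ n / ∏ y ∈ S.erase x, (x - y)

lemma prod_sub_ne_zero {S : Finset K} {x : K} (hx : x ∈ S) :
    ∏ y ∈ S.erase x, (x - y) ≠ 0 :=
  Finset.prod_ne_zero_iff.mpr fun y hy => sub_ne_zero.mpr (Ne.symm (mem_erase.mp hy).1)

lemma DD_rec {S : Finset K} {a b : K} (ha : a ∈ S) (hb : b ∈ S) (hab : a ≠ b) (n : ℕ) :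
    DD n (S.erase b) - DD n (S.erase a) = (a - b) * DD n S := by
  classical
  set T := (S.erase a).erase b with hT
  have haT : a ∉ T := fun h => (mem_erase.mp (mem_of_mem_erase h)).1 rfl
  have hbT : b ∉ T := fun h => (mem_erase.mp h).1 rfl
  have habT : a ∉ insert b T := by simp [haT, hab]
  have e1 : S.erase b = insert a T := erase_b_eq ha hab
  have e2 : S.erase a = insert b T := by
    rw [hT, erase_right_comm]; exact erase_b_eq hb (Ne.symm hab)
  have e3 : S = insert a (insert b T) := s_eq ha hb hab
  have hxa : ∀ x ∈ T, x ≠ a := fun x hx => (mem_erase.mp (mem_of_mem_erase hx)).1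
  have hxb : ∀ x ∈ T, x ≠ b := fun x hx => (mem_erase.mp hx).1
  have hQ : ∀ x ∈ T, ∏ y ∈ T.erase x, (x - y) ≠ 0 := fun x hx => prod_sub_ne_zero hx
  have hA : ∏ y ∈ T, (a - y) ≠ 0 :=
    Finset.prod_ne_zero_iff.mpr fun y hy => sub_ne_zero.mpr fun h => haT (h ▸ hy)
  have hB : ∏ y ∈ T, (b - y) ≠ 0 :=
    Finset.prod_ne_zero_iff.mpr fun y hy => sub_ne_zero.mpr fun h => hbT (h ▸ hy)
  have hab' : a - b ≠ 0 := sub_ne_zero.mpr hab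
  rw [DD, DD, DD, e1, e2, e3]
  rw [Finset.sum_insert haT, Finset.sum_insert hbT, Finset.sum_insert habT,
    Finset.sum_insert hbT]
  rw [Finset.erase_insert haT, Finset.erase_insert hbT]
  have ea : (insert a (insert b T)).erase a = insert b T := Finset.erase_insert habT
  have eb : (insert a (insert b T)).erase b = insert a T := by
    rw [Finset.erase_insert_of_ne hab, Finset.erase_insert hbT]
  rw [ea, eb]
  rw [Finset.prod_insert haT, Finset.prod_insert hbT]
  have key : ∀ x ∈ T,
      ((x ^ n / ∏ y ∈ (insert a T).erase x, (x - y))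
        - x ^ n / ∏ y ∈ (insert b T).erase x, (x - y))
      = (a - b) * (x ^ n / ∏ y ∈ (insert a (insert b T)).erase x, (x - y)) := by
    intro x hx
    have hxa' := hxa x hx
    have hxb' := hxb x hx
    have h1 : (insert a T).erase x = insert a (T.erase x) :=
      Finset.erase_insert_of_ne (Ne.symm hxa')
    have h2 : (insert b T).erase x = insert b (T.erase x) :=
      Finset.erase_insert_of_ne (Ne.symm hxb')
    have h3 : (insert a (insert b T)).erase x = insert a (insert b (T.erase x)) := by
      rw [Finset.erase_insert_of_ne (Ne.symm hxa'), Finset.erase_insert_of_ne (Ne.symm hxb')]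
    have haTx : a ∉ T.erase x := fun h => haT (mem_of_mem_erase h)
    have hbTx : b ∉ T.erase x := fun h => hbT (mem_of_mem_erase h)
    have habTx : a ∉ insert b (T.erase x) := by simp [haTx, hab]
    rw [h1, h2, h3, Finset.prod_insert haTx, Finset.prod_insert hbTx,
      Finset.prod_insert habTx, Finset.prod_insert hbTx]
    have hQx : ∏ y ∈ T.erase x, (x - y) ≠ 0 := hQ x hx
    have hxa0 : x - a ≠ 0 := sub_ne_zero.mpr hxa'
    have hxb0 : x - b ≠ 0 := sub_ne_zero.mpr hxb'
    field_simp
    ring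
  rw [show ∀ p q r s : K, (p + q) - (r + s) = (p - r) + (q - s) from by intros; ring]
  rw [← Finset.sum_sub_distrib, Finset.sum_congr rfl key, ← Finset.mul_sum]
  have t1 : a ^ n / ∏ y ∈ T, (a - y)
      = (a - b) * (a ^ n / ((a - b) * ∏ y ∈ T, (a - y))) := by
    field_simp
  have t2 : b ^ n / ∏ y ∈ T, (b - y)
      = -((a - b) * (b ^ n / ((b - a) * ∏ y ∈ T, (b - y)))) := by
    have hba' : b - a ≠ 0 := sub_ne_zero.mpr (Ne.symm hab)
    field_simp
    ring
  rw [t1, t2]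
  ring

theorem DD_eq : ∀ (m : ℕ) (S : Finset K), S.card = m → S.Nonempty → ∀ n : ℕ,
    DD n S = if S.card ≤ n + 1 then hh (n + 1 - S.card) S.toList else 0 := by
  intro m
  induction m using Nat.strong_induction_on with
  | _ m IH =>
    intro S hcard hne n
    rcases eq_or_lt_of_le (Finset.one_le_card.mpr hne) with h1 | h2
    · obtain ⟨a, rfl⟩ := Finset.card_eq_one.mp h1.symm
      rw [DD]
      simp only [Finset.sum_singleton, Finset.erase_singleton, Finset.prod_empty, div_one]
      rw [if_pos (by rw [Finset.card_singleton]; omega), Finset.card_singleton,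
        Finset.toList_singleton, hh_singleton, Nat.add_sub_cancel]
    · obtain ⟨a, ha, b, hb, hab⟩ := Finset.one_lt_card.mp h2
      have hab' : a - b ≠ 0 := sub_ne_zero.mpr hab
      have hrec := DD_rec ha hb hab n
      have hcb : (S.erase b).card = S.card - 1 := Finset.card_erase_of_mem hb
      have hca : (S.erase a).card = S.card - 1 := Finset.card_erase_of_mem ha
      have hlt : S.card - 1 < m := by omega
      have hneb : (S.erase b).Nonempty := Finset.card_pos.mp (by omega)
      have hnea : (S.erase a).Nonempty := Finset.card_pos.mp (by omega)
      have ihb := IH _ hlt (S.erase b) (by omega) hneb n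
      have iha := IH _ hlt (S.erase a) (by omega) hnea n
      by_cases hc : S.card ≤ n + 1
      · have hd : n + 1 - (S.card - 1) = (n + 1 - S.card) + 1 := by omega
        rw [if_pos (by omega), hcb, hd] at ihb
        rw [if_pos (by omega), hca, hd] at iha
        rw [ihb, iha, hf_erase_sub ha hb hab] at hrec
        rw [if_pos hc]
        exact (mul_left_cancel₀ hab' hrec).symm
      · by_cases hc2 : S.card - 1 ≤ n + 1
        · have hd0 : n + 1 - (S.card - 1) = 0 := by omega
          rw [if_pos (by omega), hcb, hd0, hh_zero] at ihb
          rw [if_pos (by omega), hca, hd0, hh_zero] at iha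
          rw [ihb, iha, sub_self] at hrec
          rw [if_neg hc]
          exact (mul_left_cancel₀ hab' (by rw [← hrec]; ring)).symm
        · rw [if_neg (by omega)] at ihb
          rw [if_neg (by omega)] at iha
          rw [ihb, iha, sub_self] at hrec
          rw [if_neg hc]
          exact (mul_left_cancel₀ hab' (by rw [← hrec]; ring)).symm

end FieldLemmas

section PadicEstimates

variable {p : ℕ} [Fact p.Prime]

lemma natCast_norm_le_one (n : ℕ) : ‖(n : ℚ_[p])‖ ≤ 1 := by
  rw [show ((n : ℚ_[p])) = ((n : ℤ) : ℚ_[p]) by push_cast; ring]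
  exact Padic.norm_int_le_one _

theorem hh_est (s₀ : ℚ_[p]) (hs : ‖s₀‖ ≤ 1) {δ : ℝ} (hδ : 0 ≤ δ) :
    ∀ (d : ℕ) (L : List ℚ_[p]), (∀ x ∈ L, ‖x‖ ≤ 1 ∧ ‖x - s₀‖ ≤ δ) →
      ‖hh d L - ((L.length + d - 1).choose d : ℚ_[p]) * s₀ ^ d‖ ≤ δ := by
  intro d L
  induction d, L using hh.induct with
  | case1 L =>
    intro _
    simpa using hδ
  | case2 d =>
    intro _
    simpa [Nat.choose_eq_zero_of_lt (by omega : d < d + 1)] using hδ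
  | case3 d a L ih1 ih2 =>
    intro hmem
    have hXa := hmem a (List.mem_cons_self)
    have hX := ih1 (fun x hx => hmem x (List.mem_cons_of_mem a hx))
    have hY := ih2 hmem
    rw [hh_cons]
    have hlen : (a :: L).length = L.length + 1 := rfl
    have hch : ((a :: L).length + (d + 1) - 1).choose (d + 1)
        = (L.length + (d + 1) - 1).choose (d + 1) + ((a :: L).length + d - 1).choose d := by
      rw [hlen]
      have e1 : L.length + 1 + (d + 1) - 1 = (L.length + d) + 1 := by omega
      have e2 : L.length + (d + 1) - 1 = L.length + d := by omega
      have e3 : L.length + 1 + d - 1 = L.length + d := by omega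
      rw [e1, e2, e3, Nat.choose_succ_succ']
      omega
    rw [hch]
    set n1 := (L.length + (d + 1) - 1).choose (d + 1)
    set n2 := ((a :: L).length + d - 1).choose d
    have expand : hh (d + 1) L + a * hh d (a :: L) - ((n1 + n2 : ℕ) : ℚ_[p]) * s₀ ^ (d + 1)
        = (hh (d + 1) L - (n1 : ℚ_[p]) * s₀ ^ (d + 1))
          + (a * (hh d (a :: L) - (n2 : ℚ_[p]) * s₀ ^ d)
          + (a - s₀) * ((n2 : ℚ_[p]) * s₀ ^ d)) := by
      push_cast
      ring
    rw [expand]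
    refine le_trans (Padic.nonarchimedean _ _)
      (max_le hX (le_trans (Padic.nonarchimedean _ _) (max_le ?_ ?_)))
    · calc ‖a * (hh d (a :: L) - (n2 : ℚ_[p]) * s₀ ^ d)‖
          = ‖a‖ * ‖hh d (a :: L) - (n2 : ℚ_[p]) * s₀ ^ d‖ := norm_mul _ _
        _ ≤ 1 * δ := mul_le_mul hXa.1 hY (norm_nonneg _) zero_le_one
        _ = δ := one_mul δ
    · calc ‖(a - s₀) * ((n2 : ℚ_[p]) * s₀ ^ d)‖
          = ‖a - s₀‖ * (‖(n2 : ℚ_[p])‖ * ‖s₀ ^ d‖) := by rw [norm_mul, norm_mul]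
        _ ≤ δ * (1 * 1) := by
            refine mul_le_mul hXa.2
              (mul_le_mul (natCast_norm_le_one n2) ?_ (norm_nonneg _) zero_le_one)
              (by positivity) hδ
            calc ‖s₀ ^ d‖ = ‖s₀‖ ^ d := norm_pow _ _
              _ ≤ 1 := pow_le_one₀ (norm_nonneg _) hs
        _ = δ := by ring

end PadicEstimates

theorem stmt_8 (p : ℕ) [Fact p.Prime] (c : ℕ → ℚ_[p])
    (hconv : ∀ x : ℤ_[p], Summable fun n : ℕ => c n * (x : ℚ_[p]) ^ n)
    (g : ℤ_[p] → ℚ_[p]) (hg : ∀ x : ℤ_[p], g x = ∑' n : ℕ, c n * (x : ℚ_[p]) ^ n)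
    (s₀ : ℤ_[p]) (m : ℕ) (hm : 1 ≤ m) :
    ∀ ε : ℝ, 0 < ε → ∃ δ : ℝ, 0 < δ ∧ ∀ j : Fin m → ℤ_[p], Function.Injective j →
      (∀ l, ‖(j l : ℚ_[p]) - (s₀ : ℚ_[p])‖ < δ) →
      ‖(∑ l : Fin m, g (j l) /
            ∏ k ∈ Finset.univ.erase l, ((j l : ℚ_[p]) - (j k : ℚ_[p]))) -
          ∑' n : ℕ, (n.choose (m - 1) : ℚ_[p]) * c n * (s₀ : ℚ_[p]) ^ (n - (m - 1))‖
        < ε := by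
  classical
  intro ε hε
  -- boundedness of the coefficients
  have hc1 : Summable c := by simpa using hconv 1
  have hc0 : Filter.Tendsto c Filter.atTop (nhds 0) := hc1.tendsto_atTop_zero
  have hbdd : BddAbove (Set.range fun n => ‖c n‖) :=
    (hc0.norm.bddAbove_range)
  obtain ⟨B, hB⟩ := hbdd
  have hBle : ∀ n, ‖c n‖ ≤ B := fun n => hB (Set.mem_range_self n)
  have hB0 : 0 ≤ B := le_trans (norm_nonneg (c 0)) (hBle 0)
  refine ⟨ε / (B + 1), by positivity, ?_⟩
  intro j hj hjδ
  set δ : ℝ := ε / (B + 1) with hδdef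
  have hδ0 : 0 ≤ δ := by positivity
  -- the set of interpolation points in ℚ_p
  set f : Fin m → ℚ_[p] := fun l => ((j l : ℚ_[p])) with hf
  have hfinj : Function.Injective f := fun a b h => hj (Subtype.coe_injective h)
  set S : Finset ℚ_[p] := Finset.image f Finset.univ with hS
  have hScard : S.card = m := by
    rw [hS, Finset.card_image_of_injective _ hfinj, Finset.card_univ, Fintype.card_fin]
  have hSne : S.Nonempty := Finset.card_pos.mp (by omega)
  have hmemS : ∀ x ∈ S, ∃ l : Fin m, f l = x := by
    intro x hx
    obtain ⟨l, _, hl⟩ := Finset.mem_image.mp hx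
    exact ⟨l, hl⟩
  -- norm facts about the points
  have hnorm1 : ∀ x ∈ S, ‖x‖ ≤ 1 := by
    intro x hx
    obtain ⟨l, rfl⟩ := hmemS x hx
    exact PadicInt.norm_le_one (j l)
  have hnormδ : ∀ x ∈ S, ‖x - (s₀ : ℚ_[p])‖ ≤ δ := by
    intro x hx
    obtain ⟨l, rfl⟩ := hmemS x hx
    exact le_of_lt (hjδ l)
  -- rewrite the LHS as a sum over S
  have hsum1 : (∑ l : Fin m, g (j l) /
        ∏ k ∈ Finset.univ.erase l, ((j l : ℚ_[p]) - (j k : ℚ_[p])))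
      = ∑ x ∈ S, (∑' n : ℕ, c n * x ^ n) / ∏ y ∈ S.erase x, (x - y) := by
    rw [hS, Finset.sum_image (fun a _ b _ h => hfinj h)]
    refine Finset.sum_congr rfl fun l _ => ?_
    rw [hg (j l)]
    congr 1
    rw [← Finset.image_erase hfinj Finset.univ l,
      Finset.prod_image (fun a _ b _ h => hfinj h)]
  -- summability of the individual series
  have hsumm : ∀ x ∈ S, Summable fun n : ℕ => c n * x ^ n / ∏ y ∈ S.erase x, (x - y) := by
    intro x hx
    obtain ⟨l, rfl⟩ := hmemS x hx
    exact (hconv (j l)).div_const _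
  -- swap sums
  have hsum2 : (∑ x ∈ S, (∑' n : ℕ, c n * x ^ n) / ∏ y ∈ S.erase x, (x - y))
      = ∑' n : ℕ, c n * DD n S := by
    have : ∀ x ∈ S, (∑' n : ℕ, c n * x ^ n) / ∏ y ∈ S.erase x, (x - y)
        = ∑' n : ℕ, c n * x ^ n / ∏ y ∈ S.erase x, (x - y) := by
      intro x hx
      rw [tsum_div_const]
    rw [Finset.sum_congr rfl this, ← Summable.tsum_finsetSum hsumm]
    refine tsum_congr fun n => ?_
    rw [DD, Finset.mul_sum]
    refine Finset.sum_congr rfl fun x hx => ?_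
    rw [mul_div_assoc]
  -- summability of both series
  have hsummA : Summable fun n : ℕ => c n * DD n S := by
    have : (fun n : ℕ => c n * DD n S)
        = fun n : ℕ => ∑ x ∈ S, c n * x ^ n / ∏ y ∈ S.erase x, (x - y) := by
      funext n
      rw [DD, Finset.mul_sum]
      exact Finset.sum_congr rfl fun x hx => (mul_div_assoc _ _ _).symm
    rw [this]
    exact summable_sum hsumm
  have hsummB : Summable fun n : ℕ =>
      (n.choose (m - 1) : ℚ_[p]) * c n * (s₀ : ℚ_[p]) ^ (n - (m - 1)) := by
    refine NonarchimedeanAddGroup.summable_of_tendsto_cofinite_zero ?_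
    rw [Nat.cofinite_eq_atTop]
    refine squeeze_zero_norm (fun n => ?_) (by simpa using hc0.norm)
    calc ‖(n.choose (m - 1) : ℚ_[p]) * c n * (s₀ : ℚ_[p]) ^ (n - (m - 1))‖
        = ‖(n.choose (m - 1) : ℚ_[p])‖ * ‖c n‖ * ‖(s₀ : ℚ_[p]) ^ (n - (m - 1))‖ := by
          rw [norm_mul, norm_mul]
      _ ≤ 1 * ‖c n‖ * 1 := by
          refine mul_le_mul (mul_le_mul (natCast_norm_le_one _) le_rfl (norm_nonneg _)
            zero_le_one) ?_ (norm_nonneg _) (by positivity)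
          calc ‖(s₀ : ℚ_[p]) ^ (n - (m - 1))‖ = ‖(s₀ : ℚ_[p])‖ ^ (n - (m - 1)) := norm_pow _ _
            _ ≤ 1 := pow_le_one₀ (norm_nonneg _) (PadicInt.norm_le_one s₀)
      _ = ‖c n‖ := by ring
  -- the per-term estimate
  have hterm : ∀ n : ℕ, ‖c n * DD n S
      - (n.choose (m - 1) : ℚ_[p]) * c n * (s₀ : ℚ_[p]) ^ (n - (m - 1))‖ ≤ B * δ := by
    intro n
    have hDD := DD_eq m S hScard hSne n
    rw [hScard] at hDD
    by_cases hc : m ≤ n + 1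
    · have hd : n + 1 - m = n - (m - 1) := by omega
      rw [if_pos hc, hd] at hDD
      have hlist : ∀ x ∈ S.toList, ‖x‖ ≤ 1 ∧ ‖x - (s₀ : ℚ_[p])‖ ≤ δ := by
        intro x hx
        have hx' : x ∈ S := Finset.mem_toList.mp hx
        exact ⟨hnorm1 x hx', hnormδ x hx'⟩
      have hest := hh_est (s₀ : ℚ_[p]) (PadicInt.norm_le_one s₀) hδ0 (n - (m - 1))
        S.toList hlist
      rw [Finset.length_toList, hScard] at hest
      have hch : (m + (n - (m - 1)) - 1).choose (n - (m - 1)) = n.choose (m - 1) := by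
        have h1 : m + (n - (m - 1)) - 1 = n := by omega
        rw [h1]
        exact Nat.choose_symm (by omega : m - 1 ≤ n)
      rw [hch] at hest
      calc ‖c n * DD n S - (n.choose (m - 1) : ℚ_[p]) * c n * (s₀ : ℚ_[p]) ^ (n - (m - 1))‖
          = ‖c n‖ * ‖hh (n - (m - 1)) S.toList
              - (n.choose (m - 1) : ℚ_[p]) * (s₀ : ℚ_[p]) ^ (n - (m - 1))‖ := by
            rw [← norm_mul]
            congr 1
            rw [hDD]
            ring
        _ ≤ B * δ := mul_le_mul (hBle n) hest (norm_nonneg _) hB0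
    · rw [if_neg hc] at hDD
      have hch0 : n.choose (m - 1) = 0 := Nat.choose_eq_zero_of_lt (by omega)
      rw [hDD, hch0]
      simp only [mul_zero, Nat.cast_zero, zero_mul, sub_zero, norm_zero]
      positivity
  -- put everything together
  rw [hsum1, hsum2, ← Summable.tsum_sub hsummA hsummB]
  have hfinal : ‖∑' n : ℕ, (c n * DD n S
      - (n.choose (m - 1) : ℚ_[p]) * c n * (s₀ : ℚ_[p]) ^ (n - (m - 1)))‖ ≤ B * δ :=
    IsUltrametricDist.norm_tsum_le_of_forall_le_of_nonneg (by positivity) hterm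
  refine lt_of_le_of_lt hfinal ?_
  rw [hδdef]
  rw [div_eq_mul_inv, ← mul_assoc]
  rw [show B * ε * (B + 1)⁻¹ = (B / (B + 1)) * ε by ring]
  have : B / (B + 1) < 1 := by
    rw [div_lt_one (by positivity)]
    linarith
  calc (B / (B + 1)) * ε < 1 * ε := by
        exact mul_lt_mul_of_pos_right this hε
    _ = ε := one_mul ε
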